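/- Let Ψ, Ξ, Φ be frames for Hilbert spaces H₁, H₃, H₂ respectively, with Ξ̃ the canonical dual of Ξ. For bounded operators P : H₁ → H₃ and O : H₃ → H₂, the matrix of the composition satisfies ⟨(O∘P) ψ_q, φ_p⟩ = ∑_k ⟨O ξ_k, φ_p⟩ · ⟨P ψ_q, ξ̃_k⟩, i.e., M^{(Φ,Ψ)}(O∘P) = M^{(Φ,Ξ)}(O) · M^{(Ξ̃,Ψ)}(P). -/

import Mathlib

open scoped InnerProductSpace

noncomputable section

local notation "ℓ²" => lp (fun _ : ℕ => ℂ) 2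

variable {H₁ H₂ H₃ : Type*}
  [NormedAddCommGroup H₁] [InnerProductSpace ℂ H₁] [CompleteSpace H₁]
  [NormedAddCommGroup H₂] [InnerProductSpace ℂ H₂] [CompleteSpace H₂]
  [NormedAddCommGroup H₃] [InnerProductSpace ℂ H₃] [CompleteSpace H₃]

/-- `ψ` is a Bessel sequence with bound `B`:  `∑ₖ |⟨f, ψₖ⟩|² ≤ B ‖f‖²`.
(Note: the paper's `⟨f, ψₖ⟩`, linear in `f`, is Mathlib's `⟪ψ k, f⟫_ℂ`.) -/
def IsBessel {H : Type*} [NormedAddCommGroup H] [InnerProductSpace ℂ H]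
    (ψ : ℕ → H) (B : ℝ) : Prop :=
  ∀ f : H, Summable (fun k => ‖⟪ψ k, f⟫_ℂ‖ ^ 2) ∧
    ∑' k, ‖⟪ψ k, f⟫_ℂ‖ ^ 2 ≤ B * ‖f‖ ^ 2

/-- `ψ` is a frame with bounds `A`, `B`:  `A ‖f‖² ≤ ∑ₖ |⟨f, ψₖ⟩|² ≤ B ‖f‖²`. -/
def IsFrame {H : Type*} [NormedAddCommGroup H] [InnerProductSpace ℂ H]
    (ψ : ℕ → H) (A B : ℝ) : Prop :=
  0 < A ∧ ∀ f : H, Summable (fun k => ‖⟪ψ k, f⟫_ℂ‖ ^ 2) ∧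
    A * ‖f‖ ^ 2 ≤ ∑' k, ‖⟪ψ k, f⟫_ℂ‖ ^ 2 ∧
    ∑' k, ‖⟪ψ k, f⟫_ℂ‖ ^ 2 ≤ B * ‖f‖ ^ 2

/-- `C` is the analysis operator of `ψ`:  `C f = (⟨f, ψₖ⟩)ₖ`. -/
def IsAnalysis {H : Type*} [NormedAddCommGroup H] [InnerProductSpace ℂ H]
    (ψ : ℕ → H) (C : H →L[ℂ] ℓ²) : Prop :=
  ∀ (f : H) (k : ℕ), C f k = ⟪ψ k, f⟫_ℂ

/-- `D` is the synthesis operator of `ψ`:  `D c = ∑ₖ cₖ ψₖ`. -/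
def IsSynthesis {H : Type*} [NormedAddCommGroup H] [InnerProductSpace ℂ H]
    (ψ : ℕ → H) (D : ℓ² →L[ℂ] H) : Prop :=
  ∀ c : ℓ², HasSum (fun k => c k • ψ k) (D c)

/-- `S` is the frame operator of `ψ`:  `S f = ∑ₖ ⟨f, ψₖ⟩ ψₖ`. -/
def IsFrameOp {H : Type*} [NormedAddCommGroup H] [InnerProductSpace ℂ H]
    (ψ : ℕ → H) (S : H →L[ℂ] H) : Prop :=
  ∀ f : H, HasSum (fun k => ⟪ψ k, f⟫_ℂ • ψ k) (S f)

/-- `dψ` is the canonical dual of `ψ`, whose frame operator is `S`: `dψ k = S⁻¹ ψ k`. -/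
def IsCanonicalDual {H : Type*} [NormedAddCommGroup H] [InnerProductSpace ℂ H]
    (ψ : ℕ → H) (S : H →L[ℂ] H) (dψ : ℕ → H) : Prop :=
  IsFrameOp ψ S ∧ ∀ k, S (dψ k) = ψ k

/-- `ψ` is a Riesz basis with bounds `A`, `B`: it is complete and
`A ∑|cₖ|² ≤ ‖∑ cₖ ψₖ‖² ≤ B ∑|cₖ|²` for all finite sequences `c`. -/
def IsRieszBasis {H : Type*} [NormedAddCommGroup H] [InnerProductSpace ℂ H]
    (ψ : ℕ → H) (A B : ℝ) : Prop :=
  0 < A ∧ (Submodule.span ℂ (Set.range ψ)).topologicalClosure = ⊤ ∧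
    ∀ c : ℕ →₀ ℂ,
      A * ∑ k ∈ c.support, ‖c k‖ ^ 2 ≤ ‖∑ k ∈ c.support, c k • ψ k‖ ^ 2 ∧
      ‖∑ k ∈ c.support, c k • ψ k‖ ^ 2 ≤ B * ∑ k ∈ c.support, ‖c k‖ ^ 2


section Aux

variable {H : Type*} [NormedAddCommGroup H] [InnerProductSpace ℂ H]

lemma frameOp_inner_hasSum {ξ : ℕ → H} {S : H →L[ℂ] H} (hS : IsFrameOp ξ S)
    (f g : H) : HasSum (fun k => ⟪ξ k, f⟫_ℂ * ⟪g, ξ k⟫_ℂ) ⟪g, S f⟫_ℂ := by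
  simpa [inner_smul_right] using (hS f).mapL (innerSL ℂ g)

lemma frameOp_symm {ξ : ℕ → H} {S : H →L[ℂ] H} (hS : IsFrameOp ξ S)
    (f g : H) : ⟪S f, g⟫_ℂ = ⟪f, S g⟫_ℂ := by
  have h1 := (frameOp_inner_hasSum hS f g).star
  have h2 := frameOp_inner_hasSum hS g f
  simp only [star_mul', ← starRingEnd_apply, inner_conj_symm] at h1
  exact h1.unique (by simpa [mul_comm] using h2)

lemma frameOp_self_inner {ξ : ℕ → H} {S : H →L[ℂ] H} (hS : IsFrameOp ξ S)
    (f : H) : HasSum (fun k => (‖⟪ξ k, f⟫_ℂ‖ ^ 2 : ℂ)) ⟪f, S f⟫_ℂ := by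
  have := frameOp_inner_hasSum hS f f
  convert this using 2 with k
  rw [← inner_conj_symm f (ξ k), Complex.mul_conj']

lemma frameOp_surjective [CompleteSpace H] {ξ : ℕ → H} {A B : ℝ} (hΞ : IsFrame ξ A B)
    {S : H →L[ℂ] H} (hS : IsFrameOp ξ S) : Function.Surjective S := by
  have hA := hΞ.1
  have hself : ∀ f : H, ⟪f, S f⟫_ℂ = (∑' k, ‖⟪ξ k, f⟫_ℂ‖ ^ 2 : ℝ) := by
    intro f
    exact (frameOp_self_inner hS f).unique
      (by simpa using ((hΞ.2 f).1.hasSum.mapL Complex.ofRealCLM))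
  have hnorm : ∀ f : H, A * ‖f‖ ≤ ‖S f‖ := by
    intro f
    have hlow : A * ‖f‖ ^ 2 ≤ ‖S f‖ * ‖f‖ := by
      calc A * ‖f‖ ^ 2 ≤ ∑' k, ‖⟪ξ k, f⟫_ℂ‖ ^ 2 := (hΞ.2 f).2.1
      _ = ‖⟪f, S f⟫_ℂ‖ := by
          rw [hself, Complex.norm_real,
            Real.norm_of_nonneg (tsum_nonneg fun k => sq_nonneg _)]
      _ ≤ ‖f‖ * ‖S f‖ := norm_inner_le_norm _ _
      _ = ‖S f‖ * ‖f‖ := mul_comm _ _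
    rcases eq_or_ne f 0 with rfl | hf
    · simp
    · have hfpos : 0 < ‖f‖ := norm_pos_iff.2 hf
      rw [sq, ← mul_assoc] at hlow
      exact le_of_mul_le_mul_right hlow hfpos
  have hanti : AntilipschitzWith (A⁻¹).toNNReal S := by
    apply AddMonoidHomClass.antilipschitz_of_bound
    intro x
    rw [Real.coe_toNNReal _ (by positivity), ← div_eq_inv_mul, le_div_iff₀ hA, mul_comm]
    exact hnorm x
  have hclosed : IsClosed (Set.range S) :=
    (hanti.isClosedEmbedding S.uniformContinuous).isClosed_range
  set K : Submodule ℂ H := LinearMap.range (S : H →ₗ[ℂ] H) with hK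
  have hKset : (K : Set H) = Set.range S := by
    ext x; simp [hK, LinearMap.mem_range]
  have hKclosed : IsClosed (K : Set H) := hKset ▸ hclosed
  haveI : CompleteSpace K := hKclosed.completeSpace_coe
  have horth : Kᗮ = ⊥ := by
    rw [Submodule.eq_bot_iff]
    intro g hg
    have h0 : ⟪S g, g⟫_ℂ = 0 :=
      (Submodule.mem_orthogonal K g).mp hg (S g) (LinearMap.mem_range_self _ g)
    have h1 : ⟪g, S g⟫_ℂ = 0 := by rw [← inner_conj_symm g (S g), h0, map_zero]
    have h2 : (∑' k, ‖⟪ξ k, g⟫_ℂ‖ ^ 2 : ℝ) = 0 := by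
      have := hself g
      rw [h1] at this
      exact_mod_cast this.symm
    have h3 : A * ‖g‖ ^ 2 ≤ 0 := h2 ▸ (hΞ.2 g).2.1
    have h4 : ‖g‖ ^ 2 ≤ 0 := le_of_mul_le_mul_left (by simpa using h3) hA
    have h5 : ‖g‖ ^ 2 = 0 := le_antisymm h4 (sq_nonneg _)
    exact norm_eq_zero.mp (pow_eq_zero_iff two_ne_zero |>.mp h5)
  have hKtop : K = ⊤ := Submodule.orthogonal_eq_bot_iff.mp horth
  intro f
  have hf : f ∈ K := hKtop.symm ▸ Submodule.mem_top
  obtain ⟨a, ha⟩ := hf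
  exact ⟨a, ha⟩

end Aux

/-- Composition of operators corresponds to multiplication of matrices:
`⟨(O∘P) ψ_q, φ_p⟩ = ∑ₖ ⟨O ξₖ, φ_p⟩ ⟨P ψ_q, ξ̃ₖ⟩`. -/
theorem stmt6 {ψ : ℕ → H₁} {φ : ℕ → H₂} {ξ : ℕ → H₃} {A B A' B' A'' B'' : ℝ}
    (hΨ : IsFrame ψ A B) (hΦ : IsFrame φ A' B') (hΞ : IsFrame ξ A'' B'')
    (SΞ : H₃ →L[ℂ] H₃) (dξ : ℕ → H₃) (hdΞ : IsCanonicalDual ξ SΞ dξ)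
    (P : H₁ →L[ℂ] H₃) (O : H₃ →L[ℂ] H₂) (p q : ℕ) :
    HasSum (fun k => ⟪φ p, O (ξ k)⟫_ℂ * ⟪dξ k, P (ψ q)⟫_ℂ)
      ⟪φ p, O (P (ψ q))⟫_ℂ := by
  obtain ⟨g, hg⟩ := frameOp_surjective hΞ hdΞ.1 (P (ψ q))
  have hrec : HasSum (fun k => ⟪dξ k, P (ψ q)⟫_ℂ • ξ k) (P (ψ q)) := by
    have h := hdΞ.1 g
    rw [hg] at h
    convert h using 2 with k
    congr 1
    rw [← hdΞ.2 k, frameOp_symm hdΞ.1, hg]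
  have h2 := (hrec.mapL O).mapL (innerSL ℂ (φ p))
  simpa [inner_smul_right, mul_comm] using h2
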